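/- Let I be a set, I₊ ⊆ I a subset, and f : I → I a bijection such that f(I₊) ⊆ I₊, ⋃_{i∈ℤ} f^i(I₊) = I, and ⋂_{i∈ℤ} f^i(I₊) = ∅. Then for every i ∈ ℤ, the set I(f,i) := f^i(I₊) \ f^{i+1}(I₊) is a cross-section for the f-orbits of I; that is, for every x ∈ I there is exactly one element of I(f,i) of the form f^m(x) with m ∈ ℤ. -/

import Mathlib

/-- If `f` is a bijection of `I`, `S ⊆ I` with `f(S) ⊆ S`,
`⋃_{i ∈ ℤ} f^i(S) = I` and `⋂_{i ∈ ℤ} f^i(S) = ∅`, then for every `i ∈ ℤ` the set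
`I(f,i) = f^i(S) \ f^{i+1}(S)` is a cross-section for the `f`-orbits of `I`:
every `x ∈ I` has exactly one element of its `f`-orbit inside `I(f,i)`. -/
theorem crossSection_of_orbits {I : Type*} (S : Set I) (f : Equiv.Perm I)
    (h1 : ⇑f '' S ⊆ S)
    (h2 : (⋃ i : ℤ, ⇑(f ^ i) '' S) = Set.univ)
    (h3 : (⋂ i : ℤ, ⇑(f ^ i) '' S) = ∅) :
    ∀ i : ℤ, ∀ x : I,
      ∃! y : I, y ∈ (⇑(f ^ i) '' S) \ (⇑(f ^ (i + 1)) '' S) ∧ ∃ m : ℤ, (f ^ m) x = y := by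
  have hnat : ∀ n : ℕ, ⇑(f ^ (n : ℤ)) '' S ⊆ S := by
    intro n
    induction n with
    | zero => simp
    | succ k ih =>
      have h : ((k + 1 : ℕ) : ℤ) = 1 + (k : ℤ) := by push_cast; ring
      rw [h, zpow_add, zpow_one]
      rw [show ⇑(f * f ^ (k : ℤ)) = ⇑f ∘ ⇑(f ^ (k : ℤ)) from rfl, Set.image_comp]
      exact (Set.image_mono ih).trans h1
  have hmono : ∀ a b : ℤ, a ≤ b → ⇑(f ^ b) '' S ⊆ ⇑(f ^ a) '' S := by
    intro a b hab
    obtain ⟨n, hn⟩ := Int.le.dest hab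
    have : f ^ b = f ^ a * f ^ (n : ℤ) := by rw [← zpow_add, hn]
    rw [this, show ⇑(f ^ a * f ^ (n : ℤ)) = ⇑(f ^ a) ∘ ⇑(f ^ (n : ℤ)) from rfl,
      Set.image_comp]
    exact Set.image_mono (hnat n)
  intro i x
  -- the set of exponents j with x ∈ f^j(S) is nonempty and bounded above
  have hne : ∃ j : ℤ, x ∈ ⇑(f ^ j) '' S := by
    have : x ∈ (⋃ i : ℤ, ⇑(f ^ i) '' S) := by rw [h2]; trivial
    simpa using this
  have hbdd : ∃ b : ℤ, ∀ j : ℤ, x ∈ ⇑(f ^ j) '' S → j ≤ b := by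
    by_contra hc
    push_neg at hc
    have : x ∈ (⋂ i : ℤ, ⇑(f ^ i) '' S) := by
      refine Set.mem_iInter.2 fun k => ?_
      obtain ⟨j, hj, hkj⟩ := hc k
      exact hmono k j hkj.le hj
    rw [h3] at this
    exact this
  obtain ⟨N, hN, hNmax⟩ := Int.exists_greatest_of_bdd hbdd hne
  have hN1 : x ∉ ⇑(f ^ (N + 1)) '' S := fun h => by
    have := hNmax (N + 1) h; omega
  refine ⟨(f ^ (i - N)) x, ⟨⟨?_, ?_⟩, i - N, rfl⟩, ?_⟩
  · obtain ⟨s, hs, hsx⟩ := hN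
    exact ⟨s, hs, by rw [← hsx, ← Equiv.Perm.mul_apply, ← zpow_add, sub_add_cancel]⟩
  · rintro ⟨t, ht, hty⟩
    apply hN1
    refine ⟨t, ht, ?_⟩
    have h := congrArg (f ^ (N - i)) hty
    rwa [← Equiv.Perm.mul_apply, ← Equiv.Perm.mul_apply, ← zpow_add, ← zpow_add,
      show N - i + (i + 1) = N + 1 by ring, show N - i + (i - N) = 0 by ring,
      zpow_zero, Equiv.Perm.one_apply] at h
  · rintro y' ⟨⟨⟨s, hs, hsy⟩, hy1⟩, m, hm⟩
    -- x ∈ f^(i-m)(S)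
    have hxm : x ∈ ⇑(f ^ (i - m)) '' S := by
      refine ⟨s, hs, ?_⟩
      have h := congrArg (f ^ (-m)) (hsy.trans hm.symm)
      rw [← Equiv.Perm.mul_apply, ← Equiv.Perm.mul_apply, ← zpow_add, ← zpow_add,
        show -m + m = 0 by ring, zpow_zero, Equiv.Perm.one_apply,
        show -m + i = i - m by ring] at h
      exact h
    have hle : i - m ≤ N := hNmax _ hxm
    have hge : N ≤ i - m := by
      by_contra hlt
      push_neg at hlt
      apply hy1
      obtain ⟨u, hu, hux⟩ := hmono (i - m + 1) N (by omega) hN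
      refine ⟨u, hu, ?_⟩
      have h := congrArg (f ^ m) hux
      rwa [← Equiv.Perm.mul_apply, ← zpow_add, show m + (i - m + 1) = i + 1 by ring,
        hm] at h
    have : m = i - N := by omega
    rw [← hm, this]
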